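/- There exists a function h ∈ BMO(ℝ²) (i.e. locally integrable with ‖h‖_{BMO(ℝ²)} < ∞) such that for every y ∈ ℝ, the horizontal slice h_y(t) = h(t,y) satisfies sup{ O(h_y, I) : I a closed interval of length 2 } = ∞; in particular no horizontal slice of h belongs to BMO(ℝ). -/

import Mathlib

open MeasureTheory Set Filter
open scoped ENNReal Topology

/-- Mean oscillation of `f : ℝ → ℝ` over `A ⊆ ℝ`. -/
noncomputable def osc1 (f : ℝ → ℝ) (A : Set ℝ) : ℝ :=
  ⨍ x in A, |f x - ⨍ y in A, f y|

/-- BMO(ℝ) seminorm. -/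
noncomputable def bmo1 (f : ℝ → ℝ) : ℝ≥0∞ :=
  ⨆ (a : ℝ) (b : ℝ) (_ : a < b), ENNReal.ofReal (osc1 f (Icc a b))

/-- Mean oscillation of `f : ℝ × ℝ → ℝ` over `E ⊆ ℝ²`. -/
noncomputable def osc2 (f : ℝ × ℝ → ℝ) (E : Set (ℝ × ℝ)) : ℝ :=
  ⨍ p in E, |f p - ⨍ q in E, f q|

/-- BMO(ℝ²) seminorm: supremum over closed axis-parallel squares of positive side length. -/
noncomputable def bmo2 (f : ℝ × ℝ → ℝ) : ℝ≥0∞ :=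
  ⨆ (a : ℝ) (b : ℝ) (l : ℝ) (_ : 0 < l),
    ENNReal.ofReal (osc2 f (Icc a (a + l) ×ˢ Icc b (b + l)))


noncomputable section

namespace BMOaux

/-- profile -/
def phi (t : ℝ) : ℝ := max 0 (-Real.log t)

lemma phi_nonneg (t : ℝ) : 0 ≤ phi t := le_max_left _ _

lemma phi_anti {s t : ℝ} (hs : 0 < s) (h : s ≤ t) : phi t ≤ phi s :=
  max_le_max le_rfl (neg_le_neg (Real.log_le_log hs h))

lemma phi_eq_zero {t : ℝ} (h : 1 ≤ t) : phi t = 0 :=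
  max_eq_left (neg_nonpos.mpr (Real.log_nonneg h))

lemma phi_of_le_one {t : ℝ} (h0 : 0 < t) (h1 : t ≤ 1) : phi t = -Real.log t :=
  max_eq_right (by simpa using Real.log_nonpos h0.le h1)

lemma phi_le_sqrt {t : ℝ} (h : 0 < t) : phi t ≤ 2 / Real.sqrt t := by
  have hs : 0 < Real.sqrt t := Real.sqrt_pos.mpr h
  rcases le_or_gt 1 t with h1 | h1
  · rw [phi_eq_zero h1]; positivity
  · rw [phi_of_le_one h h1.le]
    have e1 : -Real.log t = 2 * Real.log (Real.sqrt t)⁻¹ := by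
      rw [Real.log_inv, Real.log_sqrt h.le]; ring
    rw [e1]
    have h2 : Real.log (Real.sqrt t)⁻¹ ≤ (Real.sqrt t)⁻¹ - 1 :=
      Real.log_le_sub_one_of_pos (by positivity)
    have h3 : (Real.sqrt t)⁻¹ - 1 ≤ (Real.sqrt t)⁻¹ := by linarith
    calc 2 * Real.log (Real.sqrt t)⁻¹ ≤ 2 * (Real.sqrt t)⁻¹ := by linarith
    _ = 2 / Real.sqrt t := by rw [div_eq_mul_inv]

lemma measurable_phi : Measurable phi :=
  measurable_const.max Real.measurable_log.neg

/-- two-dimensional triangle inequality -/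
lemma two_triangle (a b c d : ℝ) :
    Real.sqrt ((a + c) ^ 2 + (b + d) ^ 2) ≤
      Real.sqrt (a ^ 2 + b ^ 2) + Real.sqrt (c ^ 2 + d ^ 2) := by
  have h := norm_add_le (⟨a, b⟩ : ℂ) ⟨c, d⟩
  have e : (⟨a, b⟩ + ⟨c, d⟩ : ℂ) = (⟨a + c, b + d⟩ : ℂ) := by
    apply Complex.ext <;> simp
  rw [e] at h
  simp only [Complex.norm_def, Complex.normSq_mk] at h
  convert h using 2 <;> ring

lemma sqrt_sq_add_sq_le (a b : ℝ) (ha : 0 ≤ a) (hb : 0 ≤ b) :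
    Real.sqrt (a ^ 2 + b ^ 2) ≤ a + b := by
  have : a ^ 2 + b ^ 2 ≤ (a + b) ^ 2 := by nlinarith
  calc Real.sqrt (a ^ 2 + b ^ 2) ≤ Real.sqrt ((a + b) ^ 2) := Real.sqrt_le_sqrt this
  _ = a + b := Real.sqrt_sq (by linarith)

/-- decoding -/
def dec : ℕ → ℕ × ℤ := (Denumerable.eqv (ℕ × ℤ)).symm

def enc : ℕ × ℤ → ℕ := Denumerable.eqv (ℕ × ℤ)

lemma dec_enc (p : ℕ × ℤ) : dec (enc p) = p := Equiv.symm_apply_apply _ _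

/-- center of segment n -/
def bb (n : ℕ) : ℝ := (2 * (dec n).2 + 1) / 2 ^ ((dec n).1 + 1)

def NN (x : ℝ) : ℕ := (⌊(x + 1) / 8⌋).toNat

def dxf (n : ℕ) (x : ℝ) : ℝ := max 0 (max (8 * n - x) (x - (8 * n + 1)))

def dsg (n : ℕ) (p : ℝ × ℝ) : ℝ := Real.sqrt ((dxf n p.1) ^ 2 + (p.2 - bb n) ^ 2)

def gb (n : ℕ) (p : ℝ × ℝ) : ℝ := phi (dsg n p)

def hh (p : ℝ × ℝ) : ℝ := gb (NN p.1) p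

lemma dxf_nonneg (n : ℕ) (x : ℝ) : 0 ≤ dxf n x := le_max_left _ _

lemma dsg_nonneg (n : ℕ) (p : ℝ × ℝ) : 0 ≤ dsg n p := Real.sqrt_nonneg _

lemma gb_nonneg (n : ℕ) (p : ℝ × ℝ) : 0 ≤ gb n p := phi_nonneg _

lemma hh_nonneg (p : ℝ × ℝ) : 0 ≤ hh p := phi_nonneg _

lemma abs_sub_le_dsg (n : ℕ) (p : ℝ × ℝ) : |p.2 - bb n| ≤ dsg n p := by
  rw [dsg, ← Real.sqrt_sq_eq_abs]
  exact Real.sqrt_le_sqrt (by nlinarith [sq_nonneg (dxf n p.1)])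

lemma dxf_le_dsg (n : ℕ) (p : ℝ × ℝ) : dxf n p.1 ≤ dsg n p := by
  rw [dsg]
  have h := Real.sqrt_le_sqrt (show (dxf n p.1)^2 ≤ (dxf n p.1)^2 + (p.2 - bb n)^2 by nlinarith [sq_nonneg (p.2 - bb n)])
  rwa [Real.sqrt_sq (dxf_nonneg n p.1)] at h

lemma dxf_lipschitz (n : ℕ) (x y : ℝ) : |dxf n x - dxf n y| ≤ |x - y| := by
  have h1 : |max (8 * (n:ℝ) - x) (x - (8 * n + 1)) - max (8 * (n:ℝ) - y) (y - (8 * n + 1))| ≤ |x - y| := by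
    have := abs_max_sub_max_le_max (8 * (n:ℝ) - x) (x - (8 * n + 1)) (8 * (n:ℝ) - y) (y - (8 * n + 1))
    have e1 : |8 * (n:ℝ) - x - (8 * n - y)| = |x - y| := by rw [show 8 * (n:ℝ) - x - (8 * n - y) = -(x - y) by ring, abs_neg]
    have e2 : |x - (8 * (n:ℝ) + 1) - (y - (8 * n + 1))| = |x - y| := by ring_nf
    rw [e1, e2] at this
    simpa using this
  calc |dxf n x - dxf n y| ≤ |max (8 * (n:ℝ) - x) (x - (8 * n + 1)) - max (8 * (n:ℝ) - y) (y - (8 * n + 1))| := by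
        have := abs_max_sub_max_le_abs (max (8 * (n:ℝ) - x) (x - (8 * n + 1))) (max (8 * (n:ℝ) - y) (y - (8 * n + 1))) 0
        simpa [dxf, max_comm] using this
  _ ≤ |x - y| := h1

lemma dsg_lipschitz (n : ℕ) (p q : ℝ × ℝ) :
    dsg n p ≤ dsg n q + (|p.1 - q.1| + |p.2 - q.2|) := by
  set A := dxf n q.1
  set B := q.2 - bb n
  set δ := |p.1 - q.1|
  set ε := |p.2 - q.2|
  have hA : dxf n p.1 ≤ A + δ := by
    have h1 := dxf_lipschitz n p.1 q.1
    have h2 := (abs_le.mp h1).2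
    have h3 := le_abs_self (dxf n p.1 - dxf n q.1)
    simp only [A, δ]
    linarith
  have hB : |p.2 - bb n| ≤ |B| + ε := by
    have e : p.2 - bb n = B + (p.2 - q.2) := by simp only [B]; ring
    rw [e]
    exact (abs_add_le _ _).trans (by simp [ε])
  have h1 : dsg n p ≤ Real.sqrt ((A + δ) ^ 2 + (|B| + ε) ^ 2) := by
    rw [dsg]
    apply Real.sqrt_le_sqrt
    have h3 : (dxf n p.1) ^ 2 ≤ (A + δ) ^ 2 := by
      apply sq_le_sq' _ hA
      have h0 := dxf_nonneg n p.1
      linarith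
    have h4 : (p.2 - bb n) ^ 2 ≤ (|B| + ε) ^ 2 := by
      nlinarith [abs_nonneg (p.2 - bb n), hB, sq_abs (p.2 - bb n), abs_nonneg B, abs_nonneg (p.2 - q.2)]
    linarith
  have h2 : Real.sqrt ((A + δ) ^ 2 + (|B| + ε) ^ 2) ≤ Real.sqrt (A ^ 2 + |B| ^ 2) + Real.sqrt (δ ^ 2 + ε ^ 2) :=
    two_triangle A |B| δ ε
  have h3 : Real.sqrt (A ^ 2 + |B| ^ 2) = dsg n q := by rw [dsg, sq_abs]
  have h4 : Real.sqrt (δ ^ 2 + ε ^ 2) ≤ δ + ε :=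
    sqrt_sq_add_sq_le δ ε (abs_nonneg _) (abs_nonneg _)
  linarith

lemma measurable_NN : Measurable NN :=
  measurable_from_top.comp (Int.measurable_floor.comp ((measurable_id.add_const 1).div_const 8))

lemma measurable_hh : Measurable hh := by
  have h1 : Measurable fun p : ℝ × ℝ => dxf (NN p.1) p.1 := by
    have hn : Measurable fun p : ℝ × ℝ => (8 * (NN p.1 : ℝ)) :=
      (measurable_from_top (f := fun n : ℕ => (8 * n : ℝ))).comp (measurable_NN.comp measurable_fst)
    exact measurable_const.max ((hn.sub measurable_fst).max (measurable_fst.sub (hn.add_const 1)))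
  have h2 : Measurable fun p : ℝ × ℝ => p.2 - bb (NN p.1) :=
    measurable_snd.sub ((measurable_from_top (f := bb)).comp (measurable_NN.comp measurable_fst))
  have h3 : Measurable fun p : ℝ × ℝ => dsg (NN p.1) p := by
    apply Measurable.sqrt
    exact (h1.pow_const 2).add (h2.pow_const 2)
  exact measurable_phi.comp h3


open intervalIntegral

lemma rpow_eq (s : ℝ) (hs : 0 < s) : 2 / Real.sqrt s = 2 * s ^ (-(1:ℝ)/2) := by
  rw [Real.sqrt_eq_rpow, show (-(1:ℝ)/2) = -(1/2) by ring, Real.rpow_neg hs.le]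
  ring

lemma ii_phi01 : IntervalIntegrable (fun s : ℝ => phi |s|) volume 0 1 := by
  rw [intervalIntegrable_iff_integrableOn_Ioc_of_le (by norm_num)]
  apply Integrable.mono' (g := fun s : ℝ => 2 * s ^ (-(1:ℝ)/2))
  · have : IntervalIntegrable (fun x : ℝ => x ^ (-(1:ℝ)/2)) volume 0 1 :=
      intervalIntegrable_rpow' (by norm_num)
    rw [intervalIntegrable_iff_integrableOn_Ioc_of_le (by norm_num)] at this
    exact this.const_mul 2
  · exact (measurable_phi.comp measurable_abs).aestronglyMeasurable.restrict
  · filter_upwards [ae_restrict_mem measurableSet_Ioc] with s hs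
    rw [Real.norm_eq_abs, abs_of_nonneg (phi_nonneg _), abs_of_pos hs.1]
    rw [← rpow_eq s hs.1]
    exact phi_le_sqrt hs.1

lemma ii_phi_neg10 : IntervalIntegrable (fun s : ℝ => phi |s|) volume (-1) 0 := by
  have h := (IntervalIntegrable.iff_comp_neg (by simp)).mp ii_phi01
  simp only [abs_neg, neg_zero, neg_neg] at h
  exact h.symm

lemma ii_phi : IntervalIntegrable (fun s : ℝ => phi |s|) volume (-1) 1 :=
  ii_phi_neg10.trans ii_phi01

lemma integrable_P : Integrable (fun s : ℝ => phi |s|) volume := by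
  rw [← integrableOn_iff_integrable_of_support_subset (s := Icc (-1) 1)]
  · rw [← intervalIntegrable_iff_integrableOn_Icc_of_le (by norm_num)]
    exact ii_phi
  · intro s hs
    simp only [Function.mem_support, ne_eq] at hs
    by_contra hmem
    apply hs
    apply phi_eq_zero
    simp only [mem_Icc, not_and_or, not_le] at hmem
    rcases hmem with h | h
    · rw [abs_of_neg (by linarith)]; linarith
    · rw [abs_of_pos (by linarith)]; linarith

lemma intval01 : ∫ s in (0:ℝ)..1, phi |s| ≤ 4 := by
  have h1 : ∫ s in (0:ℝ)..1, phi |s| ≤ ∫ s in (0:ℝ)..1, 2 * s ^ (-(1:ℝ)/2) := by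
    apply intervalIntegral.integral_mono_on (by norm_num) ii_phi01
    · exact ((intervalIntegrable_rpow' (by norm_num)).const_mul 2)
    · intro s hs
      rcases eq_or_lt_of_le hs.1 with h | h
      · subst s
        rw [abs_zero]
        simp [phi, Real.log_zero, Real.zero_rpow (show (-(1:ℝ)/2) ≠ 0 by norm_num)]
      · rw [abs_of_pos h, ← rpow_eq s h]; exact phi_le_sqrt h
  have h2 : ∫ s in (0:ℝ)..1, 2 * s ^ (-(1:ℝ)/2) = 4 := by
    rw [intervalIntegral.integral_const_mul, integral_rpow (Or.inl (by norm_num))]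
    norm_num
  linarith

lemma P_int_le : ∫ s : ℝ, phi |s| ≤ 8 := by
  have hsupp : ∫ s : ℝ, phi |s| = ∫ s in Icc (-1:ℝ) 1, phi |s| := by
    rw [setIntegral_eq_integral_of_forall_compl_eq_zero]
    intro x hx
    apply phi_eq_zero
    simp only [mem_Icc, not_and_or, not_le] at hx
    rcases hx with h | h
    · rw [abs_of_neg (by linarith)]; linarith
    · rw [abs_of_pos (by linarith)]; linarith
  have hIcc : ∫ s in Icc (-1:ℝ) 1, phi |s| = ∫ s in (-1:ℝ)..1, phi |s| := by
    rw [intervalIntegral.integral_of_le (by norm_num),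
      integral_Icc_eq_integral_Ioc]
  have hsplit : ∫ s in (-1:ℝ)..1, phi |s| =
      (∫ s in (-1:ℝ)..0, phi |s|) + ∫ s in (0:ℝ)..1, phi |s| :=
    (integral_add_adjacent_intervals ii_phi_neg10 ii_phi01).symm
  have hneg : ∫ s in (-1:ℝ)..0, phi |s| = ∫ s in (0:ℝ)..1, phi |s| := by
    have h := intervalIntegral.integral_comp_neg (a := (0:ℝ)) (b := 1) (f := fun s => phi |s|)
    simp only [abs_neg, neg_zero, neg_neg] at h
    exact h.symm
  rw [hsupp, hIcc, hsplit, hneg]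
  linarith [intval01]

lemma integrable_scaled (l c : ℝ) (hl : 0 < l) :
    Integrable (fun y : ℝ => phi (|y - c| / l)) volume := by
  have h1 : Integrable (fun y : ℝ => phi |y / l|) volume :=
    integrable_P.comp_div hl.ne'
  have h2 := h1.comp_sub_right c
  apply h2.congr
  filter_upwards with y
  rw [abs_div, abs_of_pos hl]

lemma integral_scaled_le (l c : ℝ) (hl : 0 < l) :
    ∫ y : ℝ, phi (|y - c| / l) ≤ 8 * l := by
  have e1 : ∀ y : ℝ, phi (|y - c| / l) = phi |(y - c) / l| := by
    intro y; rw [abs_div, abs_of_pos hl]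
  have e2 : ∫ y : ℝ, phi (|y - c| / l) = ∫ y : ℝ, phi |(y - c) / l| := by
    congr 1; ext y; rw [e1]
  rw [e2]
  have e3 : ∫ y : ℝ, phi |(y - c) / l| = ∫ y : ℝ, phi |y / l| :=
    integral_sub_right_eq_self (fun y => phi |y / l|) c
  rw [e3]
  have e4 := MeasureTheory.Measure.integral_comp_div (fun s => phi |s|) l
  rw [e4, abs_of_pos hl, smul_eq_mul]
  have := P_int_le
  nlinarith [hl.le]


lemma integrable_shift (c : ℝ) : Integrable (fun y : ℝ => phi |y - c|) volume :=
  integrable_P.comp_sub_right c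

lemma integral_shift_le (c : ℝ) : ∫ y : ℝ, phi |y - c| ≤ 8 := by
  have e : ∫ y : ℝ, phi |y - c| = ∫ s : ℝ, phi |s| :=
    integral_sub_right_eq_self (fun s => phi |s|) c
  rw [e]; exact P_int_le

lemma setIntegral_shift_le (c : ℝ) (t : Set ℝ) : ∫ y in t, phi |y - c| ≤ 8 := by
  refine le_trans (setIntegral_le_integral (integrable_shift c) ?_) (integral_shift_le c)
  filter_upwards with y using phi_nonneg _

/-- the majorant -/
def Hmaj (p : ℝ × ℝ) : ℝ := phi |p.2 - bb (NN p.1)|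

lemma measurable_Hmaj : Measurable Hmaj := by
  have h2 : Measurable fun p : ℝ × ℝ => p.2 - bb (NN p.1) :=
    measurable_snd.sub ((measurable_from_top (f := bb)).comp (measurable_NN.comp measurable_fst))
  exact measurable_phi.comp h2.abs

def ZZ : Set (ℝ × ℝ) := ⋃ n : ℕ, {p : ℝ × ℝ | p.2 = bb n}

lemma null_ZZ : volume ZZ = 0 := by
  apply measure_iUnion_null
  intro n
  have e : {p : ℝ × ℝ | p.2 = bb n} = (univ : Set ℝ) ×ˢ {bb n} := by
    ext ⟨x, y⟩; simp [Set.mem_prod, eq_comm]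
  rw [e, Measure.volume_eq_prod, Measure.prod_prod]
  simp

lemma hh_ae_le : ∀ᵐ p : ℝ × ℝ, hh p ≤ Hmaj p := by
  have h0 : ∀ᵐ p : ℝ × ℝ, p ∉ ZZ := measure_eq_zero_iff_ae_notMem.mp null_ZZ
  filter_upwards [h0] with p hp
  have hne : p.2 ≠ bb (NN p.1) := by
    intro h
    exact hp (Set.mem_iUnion.mpr ⟨NN p.1, h⟩)
  have hpos : 0 < |p.2 - bb (NN p.1)| := abs_pos.mpr (sub_ne_zero.mpr hne)
  exact phi_anti hpos (abs_sub_le_dsg (NN p.1) p)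

lemma integrableOn_Hmaj (s t : Set ℝ) (hs : MeasurableSet s) (ht : MeasurableSet t)
    (hsf : volume s ≠ ⊤) (htf : volume t ≠ ⊤) :
    IntegrableOn Hmaj (s ×ˢ t) volume := by
  rw [IntegrableOn, Measure.volume_eq_prod, ← Measure.prod_restrict]
  rw [integrable_prod_iff (measurable_Hmaj.aestronglyMeasurable)]
  constructor
  · filter_upwards with x
    exact ((integrable_shift (bb (NN x))).restrict)
  · apply Integrable.mono' (g := fun _ => (8:ℝ))
    · rw [integrable_const_iff]
      right
      refine ⟨?_⟩
      rw [Measure.restrict_apply_univ]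
      exact hsf.lt_top
    · exact (measurable_Hmaj.norm.aestronglyMeasurable
        (μ := (volume.restrict s).prod (volume.restrict t))).integral_prod_right'
    · filter_upwards with x
      have h1 : (fun y => ‖Hmaj (x, y)‖) = fun y => phi |y - bb (NN x)| := by
        funext y
        rw [Real.norm_eq_abs]
        simp only [Hmaj]
        rw [abs_of_nonneg (phi_nonneg _)]
      rw [h1, Real.norm_eq_abs, abs_of_nonneg (integral_nonneg (fun y => phi_nonneg _))]
      exact setIntegral_shift_le _ t

lemma integrableOn_hh (s t : Set ℝ) (hs : MeasurableSet s) (ht : MeasurableSet t)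
    (hsf : volume s ≠ ⊤) (htf : volume t ≠ ⊤) :
    IntegrableOn hh (s ×ˢ t) volume := by
  apply Integrable.mono' ((integrableOn_Hmaj s t hs ht hsf htf))
    measurable_hh.aestronglyMeasurable.restrict
  apply ae_restrict_of_ae
  filter_upwards [hh_ae_le] with p hp
  rwa [Real.norm_eq_abs, abs_of_nonneg (hh_nonneg p)]

lemma locallyIntegrable_hh : LocallyIntegrable hh volume := by
  rw [locallyIntegrable_iff]
  intro K hK
  obtain ⟨R, hR⟩ := hK.isBounded.subset_closedBall (0 : ℝ × ℝ)
  have e : Metric.closedBall (0 : ℝ × ℝ) R = (Icc (0 - R) (0 + R)) ×ˢ (Icc (0 - R) (0 + R)) := by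
    have : (0 : ℝ × ℝ) = ((0 : ℝ), (0 : ℝ)) := rfl
    rw [this, ← closedBall_prod_same, Real.closedBall_eq_Icc]
  rw [e] at hR
  exact (integrableOn_hh _ _ measurableSet_Icc measurableSet_Icc
    (by rw [Real.volume_Icc]; exact ENNReal.ofReal_ne_top)
    (by rw [Real.volume_Icc]; exact ENNReal.ofReal_ne_top)).mono_set hR


lemma setIntegral_scaled_le (l c : ℝ) (hl : 0 < l) (t : Set ℝ) :
    ∫ y in t, phi (|y - c| / l) ≤ 8 * l := by
  refine le_trans (setIntegral_le_integral (integrable_scaled l c hl) ?_) (integral_scaled_le l c hl)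
  filter_upwards with y using phi_nonneg _

lemma measurable_gen (q : ℝ → ℝ) (hq : Measurable q) (l : ℝ) :
    Measurable (fun p : ℝ × ℝ => phi (|p.2 - q p.1| / l)) :=
  measurable_phi.comp (((measurable_snd.sub (hq.comp measurable_fst)).abs).div_const l)

lemma integrableOn_gen (q : ℝ → ℝ) (hq : Measurable q) {l : ℝ} (hl : 0 < l)
    (s t : Set ℝ) (hsf : volume s ≠ ⊤) :
    IntegrableOn (fun p : ℝ × ℝ => phi (|p.2 - q p.1| / l)) (s ×ˢ t) volume := by
  rw [IntegrableOn, Measure.volume_eq_prod, ← Measure.prod_restrict]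
  rw [integrable_prod_iff ((measurable_gen q hq l).aestronglyMeasurable)]
  constructor
  · filter_upwards with x
    exact ((integrable_scaled l (q x) hl).restrict)
  · apply Integrable.mono' (g := fun _ => (8 * l : ℝ))
    · rw [integrable_const_iff]
      right
      refine ⟨?_⟩
      rw [Measure.restrict_apply_univ]
      exact hsf.lt_top
    · exact ((measurable_gen q hq l).norm.aestronglyMeasurable
        (μ := (volume.restrict s).prod (volume.restrict t))).integral_prod_right'
    · filter_upwards with x
      have h1 : (fun y => ‖phi (|y - q x| / l)‖) = fun y => phi (|y - q x| / l) := by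
        funext y
        rw [Real.norm_eq_abs, abs_of_nonneg (phi_nonneg _)]
      rw [h1, Real.norm_eq_abs, abs_of_nonneg (integral_nonneg (fun y => phi_nonneg _))]
      exact setIntegral_scaled_le l (q x) hl t

lemma setIntegral_gen_le (q : ℝ → ℝ) (hq : Measurable q) {l : ℝ} (hl : 0 < l)
    (s t : Set ℝ) (hs : MeasurableSet s) (hsf : volume s ≠ ⊤) :
    ∫ p in s ×ˢ t, phi (|p.2 - q p.1| / l) ≤ 8 * l * (volume s).toReal := by
  have hint := integrableOn_gen q hq hl s t hsf
  have hint' : Integrable (fun p : ℝ × ℝ => phi (|p.2 - q p.1| / l))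
      ((volume.restrict s).prod (volume.restrict t)) := by
    rw [Measure.prod_restrict]
    rw [IntegrableOn, Measure.volume_eq_prod] at hint
    exact hint
  have e1 : ∫ p in s ×ˢ t, phi (|p.2 - q p.1| / l) =
      ∫ x in s, ∫ y in t, phi (|y - q x| / l) := by
    rw [Measure.volume_eq_prod]
    exact setIntegral_prod _ (by rw [IntegrableOn, ← Measure.volume_eq_prod]; exact hint)
  rw [e1]
  have hF : IntegrableOn (fun x => ∫ y in t, phi (|y - q x| / l)) s volume :=
    hint'.integral_prod_left
  calc ∫ x in s, ∫ y in t, phi (|y - q x| / l)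
      ≤ ∫ _x in s, (8 * l : ℝ) := by
        apply setIntegral_mono_on hF _ hs
        · intro x _
          exact setIntegral_scaled_le l (q x) hl t
        · rw [IntegrableOn, integrable_const_iff]
          right
          refine ⟨?_⟩
          rw [Measure.restrict_apply_univ]
          exact hsf.lt_top
    _ = (volume s).toReal * (8 * l) := by rw [setIntegral_const, smul_eq_mul, measureReal_def]
    _ = 8 * l * (volume s).toReal := by ring

lemma Hmaj_eq_gen : Hmaj = fun p : ℝ × ℝ => phi (|p.2 - bb (NN p.1)| / 1) := by
  funext p; rw [div_one]; rfl

lemma measurable_bbNN : Measurable (fun x : ℝ => bb (NN x)) :=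
  (measurable_from_top (f := bb)).comp measurable_NN

lemma setint_hh_le (s t : Set ℝ) (hs : MeasurableSet s) (ht : MeasurableSet t)
    (hsf : volume s ≠ ⊤) (htf : volume t ≠ ⊤) :
    ∫ p in s ×ˢ t, hh p ≤ 8 * (volume s).toReal := by
  have h1 : ∫ p in s ×ˢ t, hh p ≤ ∫ p in s ×ˢ t, Hmaj p := by
    apply setIntegral_mono_ae_restrict (integrableOn_hh s t hs ht hsf htf)
      (integrableOn_Hmaj s t hs ht hsf htf)
    exact ae_restrict_of_ae hh_ae_le
  have h2 : ∫ p in s ×ˢ t, Hmaj p ≤ 8 * 1 * (volume s).toReal := by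
    rw [Hmaj_eq_gen]
    exact setIntegral_gen_le _ measurable_bbNN one_pos s t hs hsf
  linarith [h1, h2]


lemma vol_Icc_ne_top' (a b : ℝ) : volume (Icc a b) ≠ ⊤ := by
  rw [Real.volume_Icc]; exact ENNReal.ofReal_ne_top

lemma volQ_toReal (a b l : ℝ) (hl : 0 ≤ l) :
    (volume (Icc a (a + l) ×ˢ Icc b (b + l))).toReal = l * l := by
  rw [Measure.volume_eq_prod, Measure.prod_prod, Real.volume_Icc, Real.volume_Icc]
  simp only [add_sub_cancel_left]
  rw [← ENNReal.ofReal_mul hl, ENNReal.toReal_ofReal (by positivity)]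

lemma volQ_ne_top (a b l : ℝ) :
    volume (Icc a (a + l) ×ˢ Icc b (b + l)) ≠ ⊤ := by
  rw [Measure.volume_eq_prod, Measure.prod_prod]
  exact ENNReal.mul_ne_top (vol_Icc_ne_top' _ _) (vol_Icc_ne_top' _ _)

abbrev vol_Icc_ne_top := vol_Icc_ne_top'

lemma osc2_le_two_avg (f : ℝ × ℝ → ℝ) (Q : Set (ℝ × ℝ)) (c K : ℝ)
    (hQ : MeasurableSet Q) (h0 : volume Q ≠ 0) (hT : volume Q ≠ ⊤)
    (hf : IntegrableOn f Q volume)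
    (hK : ∫ p in Q, |f p - c| ≤ K * (volume Q).toReal) :
    osc2 f Q ≤ 2 * K := by
  have hV : 0 < (volume Q).toReal := ENNReal.toReal_pos h0 hT
  set V := (volume Q).toReal with hVdef
  set m := ⨍ p in Q, f p with hm
  have hmval : m = V⁻¹ * ∫ p in Q, f p := by
    rw [hm, setAverage_eq, smul_eq_mul, measureReal_def]
  have hintc : IntegrableOn (fun p => |f p - c|) Q volume := (hf.sub ((integrableOn_const_iff).mpr (Or.inr hT.lt_top))).abs
  have hKnn : 0 ≤ K := by
    have h0' : 0 ≤ ∫ p in Q, |f p - c| := setIntegral_nonneg hQ (fun p _ => abs_nonneg _)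
    nlinarith
  have hmc : |m - c| ≤ K := by
    have e1 : ∫ p in Q, (f p - c) = (∫ p in Q, f p) - c * V := by
      rw [integral_sub hf ((integrableOn_const_iff).mpr (Or.inr hT.lt_top)), setIntegral_const, smul_eq_mul, measureReal_def]
      ring
    have e2 : |∫ p in Q, (f p - c)| ≤ ∫ p in Q, |f p - c| := by
      have := norm_integral_le_integral_norm (μ := volume.restrict Q) (fun p => f p - c)
      simpa [Real.norm_eq_abs] using this
    have e3 : m - c = V⁻¹ * ∫ p in Q, (f p - c) := by
      rw [hmval, e1]
      field_simp
    rw [e3, abs_mul, abs_of_nonneg (by positivity : (0:ℝ) ≤ V⁻¹)]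
    calc V⁻¹ * |∫ p in Q, (f p - c)| ≤ V⁻¹ * (K * V) := by
          apply mul_le_mul_of_nonneg_left (le_trans e2 hK) (by positivity)
      _ = K := by field_simp
  have hbound : ∫ p in Q, |f p - m| ≤ (2 * K) * V := by
    have hintm : IntegrableOn (fun p => |f p - m|) Q volume :=
      (hf.sub ((integrableOn_const_iff).mpr (Or.inr hT.lt_top))).abs
    have h1 : ∫ p in Q, |f p - m| ≤ ∫ p in Q, (|f p - c| + |m - c|) := by
      apply setIntegral_mono_on hintm _ hQ
      · intro p _
        have : |f p - m| ≤ |f p - c| + |c - m| := by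
          have := abs_sub_le (f p) c m
          linarith [this]
        rw [abs_sub_comm c m] at this
        linarith
      · exact hintc.add ((integrableOn_const_iff).mpr (Or.inr hT.lt_top))
    have h2 : ∫ p in Q, (|f p - c| + |m - c|) =
        (∫ p in Q, |f p - c|) + |m - c| * V := by
      rw [integral_add hintc ((integrableOn_const_iff).mpr (Or.inr hT.lt_top)), setIntegral_const, smul_eq_mul, measureReal_def]
      ring
    rw [h2] at h1
    have : |m - c| * V ≤ K * V := mul_le_mul_of_nonneg_right hmc hV.le
    nlinarith [hK]
  have efin : osc2 f Q = V⁻¹ * ∫ p in Q, |f p - m| := by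
    simp only [osc2, ← hm]
    rw [setAverage_eq, smul_eq_mul, measureReal_def]
  rw [efin]
  calc V⁻¹ * ∫ p in Q, |f p - m| ≤ V⁻¹ * ((2 * K) * V) :=
        mul_le_mul_of_nonneg_left hbound (by positivity)
    _ = 2 * K := by field_simp

lemma osc2_hh_big (a b l : ℝ) (hl : 1 ≤ l) :
    osc2 hh (Icc a (a + l) ×ˢ Icc b (b + l)) ≤ 100 := by
  have hl0 : 0 < l := lt_of_lt_of_le one_pos hl
  set Q := Icc a (a + l) ×ˢ Icc b (b + l) with hQdef
  have hQm : MeasurableSet Q := (measurableSet_Icc.prod measurableSet_Icc)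
  have hvol : (volume Q).toReal = l * l := volQ_toReal a b l hl0.le
  have h0 : volume Q ≠ 0 := by
    intro h
    rw [h] at hvol
    simp at hvol
    nlinarith
  have hint : IntegrableOn hh Q volume :=
    integrableOn_hh _ _ measurableSet_Icc measurableSet_Icc (vol_Icc_ne_top _ _) (vol_Icc_ne_top _ _)
  have hKey : ∫ p in Q, |hh p - 0| ≤ 8 * (volume Q).toReal := by
    have e : ∀ p, |hh p - 0| = hh p := by
      intro p; rw [sub_zero, abs_of_nonneg (hh_nonneg p)]
    calc ∫ p in Q, |hh p - 0| = ∫ p in Q, hh p := by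
          apply setIntegral_congr_fun hQm; intro p _; exact e p
      _ ≤ 8 * (volume (Icc a (a+l))).toReal :=
          setint_hh_le _ _ measurableSet_Icc measurableSet_Icc (vol_Icc_ne_top _ _) (vol_Icc_ne_top _ _)
      _ ≤ 8 * (volume Q).toReal := by
          rw [hvol, Real.volume_Icc, add_sub_cancel_left, ENNReal.toReal_ofReal hl0.le]
          nlinarith
  have := osc2_le_two_avg hh Q 0 8 hQm h0 (volQ_ne_top a b l) hint hKey
  linarith


lemma NN_mono : Monotone NN := by
  intro x y hxy
  exact Int.toNat_le_toNat (Int.floor_le_floor (by linarith))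

lemma NN_ge {m : ℕ} {x : ℝ} (h : (8 * m - 1 : ℝ) ≤ x) : m ≤ NN x := by
  have h1 : (m : ℤ) ≤ ⌊(x + 1) / 8⌋ := by
    apply Int.le_floor.mpr
    push_cast
    linarith
  calc m = ((m : ℤ)).toNat := by simp
    _ ≤ (⌊(x + 1) / 8⌋).toNat := Int.toNat_le_toNat h1

lemma NN_lt {m : ℕ} (hm : m ≠ 0) {x : ℝ} (h : x < 8 * m - 1) : NN x < m := by
  have h1 : ⌊(x + 1) / 8⌋ < (m : ℤ) := Int.floor_lt.mpr (by push_cast; linarith)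
  rw [NN]
  exact (Int.toNat_lt' (Nat.pos_of_ne_zero hm)).mpr h1

lemma NN_lt_of {m : ℕ} {x : ℝ} (h : NN x < m) : x < 8 * m - 1 := by
  by_contra hc
  push_neg at hc
  exact absurd (NN_ge hc) (by omega)

lemma NN_window {n : ℕ} {x : ℝ} (h1 : (8 * n : ℝ) ≤ x) (h2 : x ≤ 8 * n + 2) : NN x = n := by
  have hf : ⌊(x + 1) / 8⌋ = (n : ℤ) := by
    apply Int.floor_eq_iff.mpr
    constructor
    · push_cast; linarith
    · push_cast; linarith
  rw [NN, hf]
  simp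

lemma gb_zero_left {n : ℕ} {p : ℝ × ℝ} (h : p.1 ≤ 8 * n - 1) : gb n p = 0 := by
  apply phi_eq_zero
  calc (1:ℝ) ≤ 8 * n - p.1 := by linarith
    _ ≤ dxf n p.1 := le_trans (le_max_left _ _) (le_max_right _ _)
    _ ≤ dsg n p := dxf_le_dsg n p

lemma gb_zero_right {n : ℕ} {p : ℝ × ℝ} (h : (8 * n + 2 : ℝ) ≤ p.1) : gb n p = 0 := by
  apply phi_eq_zero
  calc (1:ℝ) ≤ p.1 - (8 * n + 1) := by linarith
    _ ≤ dxf n p.1 := le_trans (le_max_right _ _) (le_max_right _ _)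
    _ ≤ dsg n p := dxf_le_dsg n p

lemma hh_eqOn_gb {a b l : ℝ} (hl : 0 < l) (hl1 : l ≤ 1) :
    EqOn hh (gb (NN (a + l))) (Icc a (a + l) ×ˢ Icc b (b + l)) := by
  intro p hp
  set m := NN (a + l) with hm
  obtain ⟨hp1, hp2⟩ := hp
  rw [mem_Icc] at hp1
  have hle : NN p.1 ≤ m := NN_mono (by linarith [hp1.2])
  rcases eq_or_lt_of_le hle with he | hlt
  · show gb (NN p.1) p = gb m p
    rw [he]
  · -- NN p.1 < m, so m ≥ 1 and everything vanishes
    have hx1 : p.1 < 8 * m - 1 := by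
      apply NN_lt_of
      calc NN p.1 ≤ NN p.1 := le_rfl
        _ < m := hlt
    have hm0 : m ≠ 0 := by omega
    have hal : (8 * m - 1 : ℝ) ≤ a + l := by
      by_contra hc
      push_neg at hc
      have := NN_lt hm0 hc
      omega
    have hx2 : (8 * (NN p.1) + 2 : ℝ) ≤ p.1 := by
      have hm1 : (NN p.1 : ℝ) + 1 ≤ (m:ℝ) := by exact_mod_cast hlt
      have : a ≤ p.1 := hp1.1
      have : a + l - 1 ≤ p.1 := by linarith [hp1.1]
      linarith
    show gb (NN p.1) p = gb m p
    rw [gb_zero_right hx2, gb_zero_left (le_of_lt hx1)]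

lemma integrableOn_gb (n : ℕ) (s t : Set ℝ) (hs : MeasurableSet s) (ht : MeasurableSet t)
    (hsf : volume s ≠ ⊤) (htf : volume t ≠ ⊤) :
    IntegrableOn (gb n) (s ×ˢ t) volume := by
  have hmaj : IntegrableOn (fun p : ℝ × ℝ => phi (|p.2 - bb n| / 1)) (s ×ˢ t) volume :=
    integrableOn_gen (fun _ => bb n) measurable_const one_pos s t hsf
  apply Integrable.mono' hmaj
  · have : Measurable (gb n) := by
      apply measurable_phi.comp
      apply Measurable.sqrt
      have h1 : Measurable fun p : ℝ × ℝ => dxf n p.1 :=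
        measurable_const.max ((measurable_const.sub measurable_fst).max
          (measurable_fst.sub measurable_const))
      exact (h1.pow_const 2).add ((measurable_snd.sub measurable_const).pow_const 2)
    exact this.aestronglyMeasurable.restrict
  · apply ae_restrict_of_ae
    have hline : volume {p : ℝ × ℝ | p.2 = bb n} = 0 := by
      have e : {p : ℝ × ℝ | p.2 = bb n} = (univ : Set ℝ) ×ˢ {bb n} := by
        ext ⟨x, y⟩; simp [Set.mem_prod, eq_comm]
      rw [e, Measure.volume_eq_prod, Measure.prod_prod]
      simp
    filter_upwards [measure_eq_zero_iff_ae_notMem.mp hline] with p hp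
    have hne : p.2 ≠ bb n := hp
    have hpos : 0 < |p.2 - bb n| := abs_pos.mpr (sub_ne_zero.mpr hne)
    rw [Real.norm_eq_abs, abs_of_nonneg (gb_nonneg n p), div_one]
    exact phi_anti hpos (abs_sub_le_dsg n p)

lemma gb_pointwise {n : ℕ} {aQ bQ l : ℝ} (hl : 0 < l) {p : ℝ × ℝ}
    (hp : p ∈ Icc aQ (aQ + l) ×ˢ Icc bQ (bQ + l)) (hy : p.2 ≠ bb n) :
    |gb n p - phi (max l (dsg n (aQ, bQ)))| ≤ 4 + phi (|p.2 - bb n| / l) := by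
  set d := dsg n p with hd
  set D := dsg n (aQ, bQ) with hD
  set M := max l D with hM
  have hyd : 0 < |p.2 - bb n| := abs_pos.mpr (sub_ne_zero.mpr hy)
  have hdpos : 0 < d := lt_of_lt_of_le hyd (abs_sub_le_dsg n p)
  have hMpos : 0 < M := lt_of_lt_of_le hl (le_max_left _ _)
  obtain ⟨hp1, hp2⟩ := hp
  rw [mem_Icc] at hp1 hp2
  have hdx : |p.1 - aQ| ≤ l := by rw [abs_le]; constructor <;> linarith [hp1.1, hp1.2]
  have hdy : |p.2 - bQ| ≤ l := by rw [abs_le]; constructor <;> linarith [hp2.1, hp2.2]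
  have hlip1 : d ≤ D + 2 * l := by
    have := dsg_lipschitz n p (aQ, bQ)
    simp only [← hd, ← hD] at this
    calc d ≤ D + (|p.1 - aQ| + |p.2 - bQ|) := this
      _ ≤ D + 2 * l := by linarith
  have hlip2 : D ≤ d + 2 * l := by
    have := dsg_lipschitz n (aQ, bQ) p
    simp only [← hd, ← hD] at this
    have e1 : |aQ - p.1| ≤ l := by rw [abs_sub_comm]; exact hdx
    have e2 : |bQ - p.2| ≤ l := by rw [abs_sub_comm]; exact hdy
    calc D ≤ d + (|aQ - p.1| + |bQ - p.2|) := this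
      _ ≤ d + 2 * l := by linarith
  -- step 1 : clamp
  have step1 : |gb n p - phi M| ≤ |Real.log M - Real.log d| := by
    have h := abs_max_sub_max_le_abs (-Real.log d) (-Real.log M) 0
    simp only [max_comm _ (0:ℝ)] at h
    calc |gb n p - phi M| = |max 0 (-Real.log d) - max 0 (-Real.log M)| := rfl
      _ ≤ |(-Real.log d) - (-Real.log M)| := h
      _ = |Real.log M - Real.log d| := by rw [show (-Real.log d) - (-Real.log M) = Real.log M - Real.log d by ring]
  -- bound |log M - log d|
  have hlog3 : Real.log 3 ≤ 2 := by
    have := Real.log_le_sub_one_of_pos (show (0:ℝ) < 3 by norm_num)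
    linarith
  have hlog3nn : 0 ≤ Real.log 3 := Real.log_nonneg (by norm_num)
  have bound1 : Real.log d - Real.log M ≤ 2 := by
    have h3 : d ≤ 3 * M := by
      have h1 : D ≤ M := le_max_right _ _
      have h2 : l ≤ M := le_max_left _ _
      linarith
    have := Real.log_le_log hdpos h3
    rw [Real.log_mul (by norm_num) (ne_of_gt hMpos)] at this
    linarith
  have bound2 : Real.log M - Real.log d ≤ 2 + phi (d / l) := by
    have h3 : M ≤ 3 * max l d := by
      have h1 : d + 2 * l ≤ 3 * max l d := by
        have := le_max_left l d
        have := le_max_right l d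
        linarith
      have h2 : l ≤ 3 * max l d := by
        have := le_max_left l d
        linarith
      rw [hM]
      exact max_le h2 (le_trans hlip2 h1)
    have hmaxpos : 0 < max l d := lt_of_lt_of_le hl (le_max_left _ _)
    have hlog : Real.log M ≤ Real.log 3 + Real.log (max l d) := by
      have := Real.log_le_log hMpos h3
      rwa [Real.log_mul (by norm_num) (ne_of_gt hmaxpos)] at this
    have hcase : Real.log (max l d) - Real.log d ≤ phi (d / l) := by
      rcases le_total l d with hcase1 | hcase1
      · rw [max_eq_right hcase1]
        simp [phi_nonneg]
      · rw [max_eq_left hcase1]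
        have e : Real.log l - Real.log d = -Real.log (d / l) := by
          rw [Real.log_div (ne_of_gt hdpos) (ne_of_gt hl)]
          ring
        rw [e]
        exact le_max_right _ _
    linarith
  have bound3 : phi (d / l) ≤ phi (|p.2 - bb n| / l) := by
    apply phi_anti (by positivity)
    gcongr
    exact abs_sub_le_dsg n p
  have habs : |Real.log M - Real.log d| ≤ 2 + phi (d / l) := by
    rw [abs_le]
    constructor
    · have := phi_nonneg (d / l)
      linarith
    · linarith
  calc |gb n p - phi M| ≤ |Real.log M - Real.log d| := step1
    _ ≤ 2 + phi (d / l) := habs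
    _ ≤ 4 + phi (|p.2 - bb n| / l) := by linarith [bound3, phi_nonneg (d/l)]


lemma osc2_gb_small (n : ℕ) (a b l : ℝ) (hl : 0 < l) :
    osc2 (gb n) (Icc a (a + l) ×ˢ Icc b (b + l)) ≤ 24 := by
  set Q := Icc a (a + l) ×ˢ Icc b (b + l) with hQdef
  have hQm : MeasurableSet Q := measurableSet_Icc.prod measurableSet_Icc
  have hvol : (volume Q).toReal = l * l := volQ_toReal a b l hl.le
  have h0 : volume Q ≠ 0 := by
    intro h
    rw [h] at hvol
    simp at hvol
    nlinarith
  have hT : volume Q ≠ ⊤ := volQ_ne_top a b l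
  have hgb : IntegrableOn (gb n) Q volume :=
    integrableOn_gb n _ _ measurableSet_Icc measurableSet_Icc (vol_Icc_ne_top _ _) (vol_Icc_ne_top _ _)
  set c' := phi (max l (dsg n (a, b))) with hc'
  have hgen : IntegrableOn (fun p : ℝ × ℝ => phi (|p.2 - bb n| / l)) Q volume :=
    integrableOn_gen (fun _ => bb n) measurable_const hl _ _ (vol_Icc_ne_top _ _)
  have hKey : ∫ p in Q, |gb n p - c'| ≤ 12 * (volume Q).toReal := by
    have h1 : ∫ p in Q, |gb n p - c'| ≤ ∫ p in Q, (4 + phi (|p.2 - bb n| / l)) := by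
      apply setIntegral_mono_ae_restrict
        ((hgb.sub ((integrableOn_const_iff).mpr (Or.inr hT.lt_top))).abs)
        (((integrableOn_const_iff).mpr (Or.inr hT.lt_top)).add hgen)
      have hline : volume {p : ℝ × ℝ | p.2 = bb n} = 0 := by
        have e : {p : ℝ × ℝ | p.2 = bb n} = (univ : Set ℝ) ×ˢ {bb n} := by
          ext ⟨x, y⟩; simp [Set.mem_prod, eq_comm]
        rw [e, Measure.volume_eq_prod, Measure.prod_prod]
        simp
      filter_upwards [ae_restrict_mem hQm,
        ae_restrict_of_ae (measure_eq_zero_iff_ae_notMem.mp hline)] with p hp hnp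
      exact gb_pointwise hl hp hnp
    have h2 : ∫ p in Q, (4 + phi (|p.2 - bb n| / l)) =
        4 * (volume Q).toReal + ∫ p in Q, phi (|p.2 - bb n| / l) := by
      rw [integral_add ((integrableOn_const_iff (C := (4:ℝ))).mpr (Or.inr hT.lt_top)) hgen, setIntegral_const,
        smul_eq_mul, measureReal_def]
      ring
    have h3 : ∫ p in Q, phi (|p.2 - bb n| / l) ≤ 8 * l * l := by
      have := setIntegral_gen_le (fun _ => bb n) measurable_const hl
        (Icc a (a + l)) (Icc b (b + l)) measurableSet_Icc (vol_Icc_ne_top _ _)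
      rw [Real.volume_Icc, add_sub_cancel_left, ENNReal.toReal_ofReal hl.le] at this
      exact this
    rw [h2, hvol] at h1
    rw [hvol]
    nlinarith
  have := osc2_le_two_avg (gb n) Q c' 12 hQm h0 hT hgb hKey
  linarith

lemma osc2_congr (f g : ℝ × ℝ → ℝ) (Q : Set (ℝ × ℝ)) (hQ : MeasurableSet Q)
    (h : EqOn f g Q) : osc2 f Q = osc2 g Q := by
  have e1 : ∫ p in Q, f p = ∫ p in Q, g p := setIntegral_congr_fun hQ h
  have e2 : (⨍ q in Q, f q) = ⨍ q in Q, g q := by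
    rw [setAverage_eq, setAverage_eq, e1]
  simp only [osc2, setAverage_eq, smul_eq_mul]
  rw [e1]
  congr 1
  apply setIntegral_congr_fun hQ
  intro p hp
  simp only
  rw [h hp]

lemma osc2_hh_all (a b l : ℝ) (hl : 0 < l) :
    osc2 hh (Icc a (a + l) ×ˢ Icc b (b + l)) ≤ 100 := by
  rcases le_or_gt l 1 with h1 | h1
  · rw [osc2_congr hh (gb (NN (a + l))) _ (measurableSet_Icc.prod measurableSet_Icc)
      (hh_eqOn_gb hl h1)]
    linarith [osc2_gb_small (NN (a + l)) a b l hl]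
  · exact osc2_hh_big a b l h1.le

lemma bmo2_hh_ne_top : bmo2 hh ≠ ⊤ := by
  have hle : bmo2 hh ≤ ENNReal.ofReal 100 := by
    rw [bmo2]
    apply iSup_le; intro a
    apply iSup_le; intro b
    apply iSup_le; intro l
    apply iSup_le; intro hl
    exact ENNReal.ofReal_le_ofReal (osc2_hh_all a b l hl)
  exact ne_top_of_le_ne_top ENNReal.ofReal_ne_top hle


lemma dxf_zero_on {n : ℕ} {t : ℝ} (h1 : (8 * n : ℝ) ≤ t) (h2 : t ≤ 8 * n + 1) :
    dxf n t = 0 :=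
  max_eq_left (max_le (by linarith) (by linarith))

lemma slice_on_A {n : ℕ} {y t : ℝ} (h1 : (8 * n : ℝ) ≤ t) (h2 : t ≤ 8 * n + 1) :
    hh (t, y) = phi |y - bb n| := by
  have hNN : NN t = n := NN_window h1 (by linarith)
  show gb (NN t) (t, y) = phi |y - bb n|
  rw [hNN, gb, dsg]
  simp only
  rw [dxf_zero_on h1 h2]
  norm_num
  rw [Real.sqrt_sq_eq_abs]

lemma slice_on_B {n : ℕ} {y t : ℝ} (h1 : (8 * n + 1 : ℝ) < t) (h2 : t ≤ 8 * n + 2) :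
    hh (t, y) ≤ phi (t - (8 * n + 1)) := by
  have hNN : NN t = n := NN_window (by linarith) h2
  show gb (NN t) (t, y) ≤ _
  rw [hNN]
  apply phi_anti (by linarith)
  calc t - (8 * n + 1) ≤ dxf n t := le_trans (le_max_right _ _) (le_max_right _ _)
    _ ≤ dsg n (t, y) := dxf_le_dsg n (t, y)

lemma intOn_phi_Ioc01 : IntegrableOn phi (Ioc 0 1) volume := by
  have h := ii_phi01
  rw [intervalIntegrable_iff_integrableOn_Ioc_of_le (by norm_num)] at h
  apply h.congr_fun _ measurableSet_Ioc
  intro s hs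
  simp only
  rw [abs_of_pos hs.1]

lemma int_phi_Ioc01_le : ∫ s in Ioc (0:ℝ) 1, phi s ≤ 4 := by
  have e : ∫ s in Ioc (0:ℝ) 1, phi s = ∫ s in Ioc (0:ℝ) 1, phi |s| := by
    apply setIntegral_congr_fun measurableSet_Ioc
    intro s hs
    simp only
    rw [abs_of_pos hs.1]
  rw [e, ← intervalIntegral.integral_of_le (by norm_num : (0:ℝ) ≤ 1)]
  exact intval01

lemma intOn_majB (c : ℝ) : IntegrableOn (fun t => phi (t - c)) (Ioc c (c + 1)) volume := by
  have base : IntervalIntegrable phi volume 0 1 := by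
    rw [intervalIntegrable_iff_integrableOn_Ioc_of_le (by norm_num)]
    exact intOn_phi_Ioc01
  have h := base.comp_sub_right c
  rw [intervalIntegrable_iff_integrableOn_Ioc_of_le (by linarith)] at h
  simpa [add_comm] using h

lemma int_majB_le (c : ℝ) : ∫ t in Ioc c (c + 1), phi (t - c) ≤ 4 := by
  rw [← intervalIntegral.integral_of_le (by linarith : c ≤ c + 1)]
  rw [intervalIntegral.integral_comp_sub_right phi c]
  simp only [sub_self, add_sub_cancel_left]
  rw [intervalIntegral.integral_of_le (by norm_num : (0:ℝ) ≤ 1)]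
  exact int_phi_Ioc01_le

lemma bb_enc (k : ℕ) (j : ℤ) : bb (enc (k, j)) = (2 * j + 1) / 2 ^ (k + 1) := by
  rw [bb, dec_enc]

lemma slice_osc (y : ℝ) (k : ℕ) (j : ℤ)
    (h1 : 0 < |y - (2 * j + 1) / 2 ^ (k + 1)|)
    (h2 : |y - (2 * j + 1) / 2 ^ (k + 1)| ≤ (1 / 2 : ℝ) ^ (k + 1)) :
    ((k + 1) * Real.log 2 - 4) / 2 ≤
      osc1 (fun t => hh (t, y)) (Icc (8 * (enc (k, j)) : ℝ) ((8 * (enc (k, j)) : ℝ) + 2)) := by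
  set n := enc (k, j) with hn
  set eps := |y - bb n| with heps
  have hbbn : bb n = (2 * j + 1) / 2 ^ (k + 1) := bb_enc k j
  have heps_pos : 0 < eps := by rw [heps, hbbn]; exact h1
  have heps_le : eps ≤ (1 / 2 : ℝ) ^ (k + 1) := by rw [heps, hbbn]; exact h2
  have hhalf : ((1:ℝ) / 2) ^ (k + 1) ≤ 1 / 2 := by
    calc ((1:ℝ)/2) ^ (k+1) ≤ ((1:ℝ)/2) ^ 1 := by
          apply pow_le_pow_of_le_one (by norm_num) (by norm_num) (by omega)
      _ = 1/2 := pow_one _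
  set a : ℝ := (8 * n : ℝ) with ha
  set f : ℝ → ℝ := fun t => hh (t, y) with hf
  set A := Icc a (a + 1) with hA
  set B := Ioc (a + 1) (a + 2) with hB
  set I := Icc a (a + 2) with hI
  have hIAB : A ∪ B = I := Icc_union_Ioc_eq_Icc (by linarith) (by linarith)
  have hdisj : Disjoint A B := by
    apply Set.disjoint_left.mpr
    intro t htA htB
    exact absurd htB.1 (not_lt.mpr htA.2)
  have hfA : ∀ t ∈ A, f t = phi eps := by
    intro t ht
    rw [mem_Icc] at ht
    exact slice_on_A (by rw [ha] at ht; exact_mod_cast ht.1) (by rw [ha] at ht; push_cast; linarith [ht.2])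
  have hfB : ∀ t ∈ B, f t ≤ phi (t - (a + 1)) := by
    intro t ht
    rw [hB, mem_Ioc] at ht
    have := slice_on_B (n := n) (y := y) (t := t) (by push_cast; rw [ha] at ht; exact_mod_cast ht.1) (by rw [ha] at ht; push_cast; linarith [ht.2])
    convert this using 3 <;> push_cast <;> ring
  have hf_nonneg : ∀ t, 0 ≤ f t := fun t => hh_nonneg (t, y)
  -- integrability
  have hIA : IntegrableOn f A volume := by
    apply ((integrableOn_const_iff).mpr (Or.inr ?_)).congr_fun (fun t ht => (hfA t ht).symm) measurableSet_Icc
    rw [hA, Real.volume_Icc]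
    exact ENNReal.ofReal_lt_top
  have hmajB : IntegrableOn (fun t => phi (t - (a + 1))) B volume := by
    have := intOn_majB (a + 1)
    simpa [show a + 1 + 1 = a + 2 by ring] using this
  have hIB : IntegrableOn f B volume := by
    apply Integrable.mono' hmajB
    · exact (measurable_hh.comp (measurable_id.prodMk measurable_const)).aestronglyMeasurable.restrict
    · filter_upwards [ae_restrict_mem measurableSet_Ioc] with t ht
      rw [Real.norm_eq_abs, abs_of_nonneg (hf_nonneg t)]
      exact hfB t ht
  have hII : IntegrableOn f I volume := by
    rw [← hIAB]
    exact hIA.union hIB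
  -- volumes
  have hvolA : (volume A).toReal = 1 := by
    rw [hA, Real.volume_Icc]
    norm_num
  have hvolB : (volume B).toReal = 1 := by
    rw [hB, Real.volume_Ioc]
    norm_num
  have hvolI : (volume I).toReal = 2 := by
    rw [hI, Real.volume_Icc]
    norm_num
  have hvolI_ne : volume I ≠ 0 := by
    intro h
    rw [h] at hvolI
    simp at hvolI
  have hvolI_top : volume I ≠ ⊤ := by
    rw [hI]; exact vol_Icc_ne_top _ _
  -- integral over A
  have hintA : ∫ t in A, f t = phi eps := by
    rw [setIntegral_congr_fun measurableSet_Icc (fun t ht => hfA t ht), setIntegral_const, measureReal_def, hvolA]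
    simp
  -- integral over B
  have hintB : ∫ t in B, f t ≤ 4 := by
    calc ∫ t in B, f t ≤ ∫ t in B, phi (t - (a + 1)) :=
          setIntegral_mono_on hIB hmajB measurableSet_Ioc hfB
      _ ≤ 4 := by
          have := int_majB_le (a + 1)
          simpa [show a + 1 + 1 = a + 2 by ring] using this
  set m := ⨍ t in I, f t with hm
  have hconstI : IntegrableOn (fun _ : ℝ => m) I volume := (integrableOn_const_iff).mpr (Or.inr hvolI_top.lt_top)
  have hfm : IntegrableOn (fun t => |f t - m|) I volume := (hII.sub hconstI).abs
  have hsplit : ∫ t in I, |f t - m| = (∫ t in A, |f t - m|) + ∫ t in B, |f t - m| := by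
    rw [← hIAB]
    exact setIntegral_union hdisj measurableSet_Ioc (hfm.mono_set (by rw [← hIAB]; exact subset_union_left))
      (hfm.mono_set (by rw [← hIAB]; exact subset_union_right))
  have hintAm : ∫ t in A, (f t - m) = phi eps - m := by
    rw [integral_sub (hIA) ((integrableOn_const_iff).mpr (Or.inr (by rw [hA, Real.volume_Icc]; exact ENNReal.ofReal_lt_top))), hintA, setIntegral_const, measureReal_def, hvolA]
    simp
  have hintBm : ∫ t in B, (f t - m) = (∫ t in B, f t) - m := by
    rw [integral_sub (hIB) ((integrableOn_const_iff).mpr (Or.inr (by rw [hB, Real.volume_Ioc]; exact ENNReal.ofReal_lt_top))), setIntegral_const, measureReal_def, hvolB]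
    simp
  have habsA : |∫ t in A, (f t - m)| ≤ ∫ t in A, |f t - m| := by
    have := norm_integral_le_integral_norm (μ := volume.restrict A) (fun t => f t - m)
    simpa [Real.norm_eq_abs] using this
  have habsB : |∫ t in B, (f t - m)| ≤ ∫ t in B, |f t - m| := by
    have := norm_integral_le_integral_norm (μ := volume.restrict B) (fun t => f t - m)
    simpa [Real.norm_eq_abs] using this
  have hlower : phi eps - 4 ≤ ∫ t in I, |f t - m| := by
    rw [hsplit]
    have h1 : phi eps - m ≤ |∫ t in A, (f t - m)| := by
      rw [hintAm]; exact le_abs_self _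
    have h2 : m - ∫ t in B, f t ≤ |∫ t in B, (f t - m)| := by
      rw [hintBm]
      calc m - ∫ t in B, f t = -((∫ t in B, f t) - m) := by ring
        _ ≤ |(∫ t in B, f t) - m| := neg_le_abs _
    linarith [habsA, habsB, hintB]
  -- phi eps lower bound
  have hphi_eps : (k + 1) * Real.log 2 ≤ phi eps := by
    rw [phi_of_le_one heps_pos (by linarith)]
    have hlog : Real.log eps ≤ Real.log ((1/2 : ℝ) ^ (k + 1)) :=
      Real.log_le_log heps_pos heps_le
    rw [Real.log_pow] at hlog
    have : Real.log ((1:ℝ)/2) = -Real.log 2 := by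
      rw [one_div, Real.log_inv]
    rw [this] at hlog
    push_cast at hlog ⊢
    linarith
  -- conclude
  have hosc : osc1 f I = (volume I).toReal⁻¹ * ∫ t in I, |f t - m| := by
    simp only [osc1, ← hm]
    rw [setAverage_eq, smul_eq_mul, measureReal_def]
  have : ((k+1) * Real.log 2 - 4) / 2 ≤ ((volume I).toReal⁻¹ * ∫ t in I, |f t - m|) := by
    rw [hvolI]
    have h4 : (k + 1 : ℝ) * Real.log 2 - 4 ≤ ∫ t in I, |f t - m| := by linarith
    linarith [h4]
  rw [hI] at hosc ⊢
  rw [← hosc] at this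
  convert this using 2 <;> (push_cast; ring)



lemma good_level (y : ℝ) (k : ℕ) :
    ∃ (k' : ℕ) (j : ℤ), k ≤ k' ∧ 0 < |y - (2 * j + 1) / 2 ^ (k' + 1)| ∧
      |y - (2 * j + 1) / 2 ^ (k' + 1)| ≤ (1 / 2 : ℝ) ^ (k' + 1) := by
  set j : ℤ := ⌊(2:ℝ) ^ k * y⌋ with hj
  have hfl : (j : ℝ) ≤ 2 ^ k * y := Int.floor_le _
  have hfl2 : 2 ^ k * y < (j : ℝ) + 1 := Int.lt_floor_add_one _
  have hpow1 : (0:ℝ) < 2 ^ (k+1) := by positivity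
  have he : y - (2 * j + 1) / 2 ^ (k + 1) = (2 * (2 ^ k * y - j) - 1) / 2 ^ (k + 1) := by
    field_simp
    ring
  have hnum : |2 * (2 ^ k * y - (j:ℝ)) - 1| ≤ 1 := by
    rw [abs_le]
    constructor <;> nlinarith
  have hle : |y - (2 * j + 1) / 2 ^ (k + 1)| ≤ (1 / 2 : ℝ) ^ (k + 1) := by
    rw [he, abs_div, abs_of_pos hpow1]
    calc |2 * (2 ^ k * y - (j:ℝ)) - 1| / 2 ^ (k+1) ≤ 1 / 2 ^ (k+1) := by gcongr
      _ = (1/2:ℝ)^(k+1) := by rw [div_pow, one_pow]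
  rcases eq_or_lt_of_le (abs_nonneg (y - (2 * j + 1) / 2 ^ (k + 1))) with h0 | hpos
  · have hy : y = (2 * j + 1) / 2 ^ (k + 1) := by
      have := abs_eq_zero.mp h0.symm
      have := sub_eq_zero.mp this
      linarith [this]
    have he2 : y - (2 * (2 * j + 1) + 1) / 2 ^ (k + 1 + 1) = -(1 / 2 ^ (k + 2)) := by
      rw [hy]
      push_cast
      have h2 : ((2:ℝ)) ^ (k+1+1) = 2 ^ (k+1) * 2 := by ring
      have h3 : ((2:ℝ)) ^ (k+2) = 2 ^ (k+1) * 2 := by ring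
      field_simp
      ring
    refine ⟨k + 1, 2 * j + 1, by omega, ?_, ?_⟩
    · have e : |y - (2 * (2 * j + 1) + 1) / 2 ^ (k + 1 + 1)| = 1 / 2 ^ (k + 2) := by
        rw [he2, abs_neg, abs_of_pos (by positivity)]
      push_cast at e ⊢
      rw [e]
      positivity
    · have e : |y - (2 * (2 * j + 1) + 1) / 2 ^ (k + 1 + 1)| = 1 / 2 ^ (k + 2) := by
        rw [he2, abs_neg, abs_of_pos (by positivity)]
      push_cast at e ⊢
      rw [e, div_pow, one_pow]
  · exact ⟨k, j, le_rfl, hpos, hle⟩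

lemma slice_unbounded (y : ℝ) (C : ℝ) :
    ∃ a : ℝ, C < osc1 (fun t => hh (t, y)) (Icc a (a + 2)) := by
  have hlog2 : 0 < Real.log 2 := Real.log_pos (by norm_num)
  obtain ⟨k0, hk0⟩ := exists_nat_gt ((2 * C + 4) / Real.log 2)
  obtain ⟨k, j, hk, hpos, hle⟩ := good_level y k0
  refine ⟨(8 * (enc (k, j)) : ℝ), ?_⟩
  have hbig := slice_osc y k j hpos hle
  have h1 : (2 * C + 4) < k0 * Real.log 2 := by
    rw [div_lt_iff₀ hlog2] at hk0
    linarith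
  have h2 : (k0 : ℝ) * Real.log 2 ≤ (k + 1) * Real.log 2 := by
    apply mul_le_mul_of_nonneg_right _ hlog2.le
    push_cast
    have : (k0 : ℝ) ≤ k := by exact_mod_cast hk
    linarith
  have h3 : C < ((k + 1) * Real.log 2 - 4) / 2 := by
    have : 2 * C + 4 < (k + 1) * Real.log 2 := lt_of_lt_of_le h1 h2
    linarith
  exact lt_of_lt_of_le h3 hbig

lemma bmo1_slice_top (y : ℝ) : bmo1 (fun t => hh (t, y)) = ⊤ := by
  by_contra hne
  set S := bmo1 (fun t => hh (t, y)) with hS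
  have hbound : ∀ a : ℝ, osc1 (fun t => hh (t, y)) (Icc a (a + 2)) ≤ S.toReal := by
    intro a
    have hle : ENNReal.ofReal (osc1 (fun t => hh (t, y)) (Icc a (a + 2))) ≤ S := by
      rw [hS, bmo1]
      exact le_iSup_of_le a (le_iSup_of_le (a + 2) (le_iSup_of_le (by linarith) le_rfl))
    rcases le_or_gt (osc1 (fun t => hh (t, y)) (Icc a (a + 2))) 0 with h0 | h0
    · have : (0:ℝ) ≤ S.toReal := ENNReal.toReal_nonneg
      linarith
    · rwa [ENNReal.ofReal_le_iff_le_toReal hne] at hle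
  obtain ⟨a, ha⟩ := slice_unbounded y S.toReal
  exact absurd (hbound a) (not_le.mpr ha)

end BMOaux

/-- there is a function `h ∈ BMO(ℝ²)` such that, for every `y`, the
mean oscillations of the horizontal slice `h(·, y)` over closed intervals of length `2`
are unbounded; in particular no horizontal slice of `h` belongs to `BMO(ℝ)`. -/
theorem exists_bmo_with_all_horizontal_slices_unbounded :
    ∃ h : ℝ × ℝ → ℝ,
      LocallyIntegrable h volume ∧
      bmo2 h ≠ ⊤ ∧
      (∀ y : ℝ, ∀ C : ℝ, ∃ a : ℝ, C < osc1 (fun t => h (t, y)) (Icc a (a + 2))) ∧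
      (∀ y : ℝ, bmo1 (fun t => h (t, y)) = ⊤) :=
  ⟨BMOaux.hh, BMOaux.locallyIntegrable_hh, BMOaux.bmo2_hh_ne_top,
    BMOaux.slice_unbounded, BMOaux.bmo1_slice_top⟩
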